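/- Define Z_n(ε_1,ε_2,a⃗) = ∑_{|Y⃗|=n} 1/∏_{α,β} n^{Y⃗}_{α,β}(ε_1,ε_2,a⃗) as the n-th coefficient of Nekrasov's partition function for rank r, and let l^{k⃗}_α be as above. Assume the blowup relation (d=1): for all n ≥ 1, n·ε_1·Z_n(ε_1,ε_2−ε_1,a⃗) + n·ε_2·Z_n(ε_1−ε_2,ε_2,a⃗) = −∑ over (k⃗,l,m) with k⃗ ∈ Q \ {0} or (l,m) with l,m < n, (1/2)(k⃗,k⃗)+l+m = n, of (lε_1 + mε_2 + (k⃗,a⃗) + (1/2)(k⃗,k⃗)(ε_1+ε_2)) · Z_l(ε_1,ε_2−ε_1,a⃗+ε_1k⃗) Z_m(ε_1−ε_2,ε_2,a⃗+ε_2k⃗) / ∏_{α∈Δ} l^{k⃗}_α(ε_1,ε_2,a⃗). Then Z_n(ε_1, −2ε_1, a⃗) = Z_n(2ε_1, −ε_1, a⃗) for all n ≥ 0. -/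

import Mathlib

noncomputable section

/-- Arm-length of `s = (i,j)` (0-indexed) in `Y`; may be negative outside `Y`. -/
def armLen (Y : YoungDiagram) (s : ℕ × ℕ) : ℤ := (Y.rowLen s.1 : ℤ) - s.2 - 1

/-- Leg-length of `s = (i,j)` (0-indexed) in `Y`; may be negative outside `Y`. -/
def legLen (Y : YoungDiagram) (s : ℕ × ℕ) : ℤ := (Y.colLen s.2 : ℤ) - s.1 - 1

/-- `n^{Y⃗}_{α,β}(ε₁,ε₂,a⃗) = ∏_{s∈Y_α}(−l_{Y_β}(s)ε₁ + (a_{Y_α}(s)+1)ε₂ + a_β − a_α)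
  · ∏_{t∈Y_β}((l_{Y_α}(t)+1)ε₁ − a_{Y_β}(t)ε₂ + a_β − a_α)`. -/
def nYab {K : Type*} [CommRing K] {r : ℕ} (Y : Fin r → YoungDiagram) (α β : Fin r)
    (e1 e2 : K) (a : Fin r → K) : K :=
  (∏ s ∈ (Y α).cells,
      ((-(legLen (Y β) s : K)) * e1 + ((armLen (Y α) s : K) + 1) * e2 + a β - a α)) *
    ∏ t ∈ (Y β).cells,
      (((legLen (Y α) t : K) + 1) * e1 - (armLen (Y β) t : K) * e2 + a β - a α)

/-- The `n`-th coefficient `Z_n(ε₁,ε₂,a⃗)` of Nekrasov's partition function: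
the sum over `r`-tuples of Young diagrams of total size `n` of
`1/∏_{α,β} n^{Y⃗}_{α,β}(ε₁,ε₂,a⃗)`. -/
def Zcoeff (K : Type*) [Field K] (r n : ℕ) (e1 e2 : K) (a : Fin r → K) : K :=
  ∑ᶠ Y ∈ {Y : Fin r → YoungDiagram | (∑ α, (Y α).card) = n},
    (∏ α, ∏ β, nYab Y α β e1 e2 a)⁻¹

/-- The triangle `{(i,j) ∈ ℕ² : i + j ≤ N}`. -/
def tri (N : ℕ) : Finset (ℕ × ℕ) :=
  (Finset.range (N + 1) ×ˢ Finset.range (N + 1)).filter fun p => p.1 + p.2 ≤ N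

/-- `L_m(ε₁,ε₂,x)`: the blowup factor `l^{k⃗}_α` as a function of `m = ⟨k⃗,α⟩`,
`x = ⟨a⃗,α⟩`. -/
def Lm {R : Type*} [CommRing R] (m : ℤ) (e1 e2 x : R) : R :=
  if m < 0 then ∏ p ∈ tri (-m - 1).toNat, (-(p.1 : R) * e1 - (p.2 : R) * e2 + x)
  else if 1 < m then ∏ p ∈ tri (m - 2).toNat, (((p.1 : R) + 1) * e1 + ((p.2 : R) + 1) * e2 + x)
  else 1

lemma mem_tri {N : ℕ} {p : ℕ × ℕ} : p ∈ tri N ↔ p.1 + p.2 ≤ N := by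
  simp only [tri, Finset.mem_filter, Finset.mem_product, Finset.mem_range]
  omega

lemma tri_card (N : ℕ) : 2 * (tri N).card = (N + 1) * (N + 2) := by
  induction N with
  | zero => decide
  | succ n ih =>
      have hdisj : Disjoint (tri n) (Finset.HasAntidiagonal.antidiagonal (n+1)) := by
        rw [Finset.disjoint_left]
        intro p hp hp'
        rw [mem_tri] at hp
        rw [Finset.HasAntidiagonal.mem_antidiagonal] at hp'
        omega
      have hun : tri (n+1) = tri n ∪ Finset.HasAntidiagonal.antidiagonal (n+1) := by
        ext p
        rw [mem_tri, Finset.mem_union, mem_tri, Finset.HasAntidiagonal.mem_antidiagonal]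
        omega
      rw [hun, Finset.card_union_of_disjoint hdisj, Finset.Nat.card_antidiagonal]
      ring_nf
      ring_nf at ih
      omega

def emExp (m : ℤ) : ℕ :=
  if m < 0 then (tri (-m - 1).toNat).card else if 1 < m then (tri (m - 2).toNat).card else 0

lemma two_emExp (m : ℤ) : 2 * (emExp m : ℤ) = m * (m - 1) := by
  unfold emExp
  split_ifs with h1 h2
  · have h := tri_card (-m - 1).toNat
    have h2 : (((-m - 1).toNat : ℤ)) = -m - 1 := Int.toNat_of_nonneg (by omega)
    have : (2 * (tri (-m-1).toNat).card : ℤ) = (((-m-1).toNat : ℤ) + 1) * (((-m-1).toNat : ℤ) + 2) := by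
      exact_mod_cast h
    rw [h2] at this
    linarith [this]
  · have h := tri_card (m - 2).toNat
    have h3 : (((m - 2).toNat : ℤ)) = m - 2 := Int.toNat_of_nonneg (by omega)
    have : (2 * (tri (m-2).toNat).card : ℤ) = (((m-2).toNat : ℤ) + 1) * (((m-2).toNat : ℤ) + 2) := by
      exact_mod_cast h
    rw [h3] at this
    linarith [this]
  · have : m = 0 ∨ m = 1 := by omega
    rcases this with h | h <;> simp [h]

lemma prod_tri_swap {K : Type*} [CommRing K] (N : ℕ) (g : ℕ × ℕ → K) :
    ∏ p ∈ tri N, g p = ∏ p ∈ tri N, g p.swap := by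
  apply Finset.prod_nbij' Prod.swap Prod.swap
  · intro p hp; rw [mem_tri] at hp ⊢; simpa [Nat.add_comm] using hp
  · intro p hp; rw [mem_tri] at hp ⊢; simpa [Nat.add_comm] using hp
  · intro p _; simp
  · intro p _; simp
  · intro p _; rfl

lemma prod_neg_fin {K : Type*} [CommRing K] (s : Finset (ℕ × ℕ)) (g : ℕ × ℕ → K) :
    ∏ p ∈ s, (-(g p)) = (-1) ^ s.card * ∏ p ∈ s, g p := by
  rw [← Finset.prod_const, ← Finset.prod_mul_distrib]
  simp

lemma Lm_neg_x {K : Type*} [CommRing K] (m : ℤ) (e1 x : K) :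
    Lm m e1 (-e1) (-x) = (-1) ^ (emExp m) * Lm m e1 (-e1) x := by
  unfold Lm emExp
  split_ifs with h1 h2
  · rw [prod_tri_swap _ (fun p => -(p.1 : K) * e1 - (p.2 : K) * (-e1) + -x)]
    rw [← prod_neg_fin]
    apply Finset.prod_congr rfl
    intro p _
    simp only [Prod.fst_swap, Prod.snd_swap]
    ring
  · rw [prod_tri_swap _ (fun p => ((p.1 : K) + 1) * e1 + ((p.2 : K) + 1) * (-e1) + -x)]
    rw [← prod_neg_fin]
    apply Finset.prod_congr rfl
    intro p _
    simp only [Prod.fst_swap, Prod.snd_swap]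
    ring
  · simp

lemma emExp_zero : emExp 0 = 0 := by simp [emExp]

lemma sum_quad (r : ℕ) (k : Fin r → ℤ) (hk0 : ∑ α, k α = 0) :
    ∑ α, ∑ β, (k β - k α) * ((k β - k α) - 1) = 2 * r * ∑ α, (k α) ^ 2 := by
  have step : ∀ α : Fin r, ∑ β, (k β - k α) * ((k β - k α) - 1)
      = (∑ β, (k β)^2) + r * (k α)^2 - 2 * (k α) * (∑ β, k β) - (∑ β, k β) + r * (k α) := by
    intro α
    have : ∀ β : Fin r, (k β - k α) * ((k β - k α) - 1)
        = (k β)^2 + (k α)^2 - 2 * (k α * k β) - k β + k α := by intro β; ring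
    rw [Finset.sum_congr rfl (fun β _ => this β)]
    simp only [Finset.sum_add_distrib, Finset.sum_sub_distrib, Finset.sum_const,
      Finset.card_univ, Fintype.card_fin, smul_eq_mul, ← Finset.mul_sum]
    ring
  rw [Finset.sum_congr rfl (fun α _ => step α)]
  simp only [hk0, mul_zero, sub_zero, Finset.sum_add_distrib, Finset.sum_sub_distrib,
    Finset.sum_const, Finset.card_univ, Fintype.card_fin, smul_eq_mul, ← Finset.mul_sum, hk0]
  ring

lemma even_sum_emExp (r : ℕ) (k : Fin r → ℤ) (hk0 : ∑ α, k α = 0)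
    (hke : Even (∑ α, (k α) ^ 2)) :
    Even (∑ p ∈ Finset.univ.filter (fun p : Fin r × Fin r => p.1 ≠ p.2),
      emExp (k p.2 - k p.1)) := by
  have hfull : ∑ p ∈ Finset.univ.filter (fun p : Fin r × Fin r => p.1 ≠ p.2),
      emExp (k p.2 - k p.1) = ∑ p : Fin r × Fin r, emExp (k p.2 - k p.1) := by
    apply Finset.sum_filter_of_ne
    intro p _ hne heq
    exact absurd (by rw [heq]; simp [emExp_zero]) hne
  rw [hfull]
  have h2 : 2 * ((∑ p : Fin r × Fin r, emExp (k p.2 - k p.1) : ℕ) : ℤ)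
      = ∑ p : Fin r × Fin r, (k p.2 - k p.1) * ((k p.2 - k p.1) - 1) := by
    push_cast
    rw [Finset.mul_sum]
    exact Finset.sum_congr rfl fun p _ => two_emExp _
  have h3 : ∑ p : Fin r × Fin r, (k p.2 - k p.1) * ((k p.2 - k p.1) - 1)
      = 2 * r * ∑ α, (k α) ^ 2 := by
    rw [Fintype.sum_prod_type]
    exact sum_quad r k hk0
  have h4 : ((∑ p : Fin r × Fin r, emExp (k p.2 - k p.1) : ℕ) : ℤ)
      = r * ∑ α, (k α) ^ 2 := by
    have := h2.trans h3
    linarith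
  have h5 : Even ((∑ p : Fin r × Fin r, emExp (k p.2 - k p.1) : ℕ) : ℤ) := by
    rw [h4]; exact (hke).mul_left _
  exact_mod_cast h5

lemma prod_Lm_flip {K : Type*} [Field K] (r : ℕ) (k : Fin r → ℤ) (a : Fin r → K) (e1 : K)
    (hk0 : ∑ α, k α = 0) (hke : Even (∑ α, (k α) ^ 2)) :
    ∏ p ∈ Finset.univ.filter (fun p : Fin r × Fin r => p.1 ≠ p.2),
        Lm (k p.1 - k p.2) e1 (-e1) (a p.2 - a p.1)
      = ∏ p ∈ Finset.univ.filter (fun p : Fin r × Fin r => p.1 ≠ p.2),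
        Lm (k p.2 - k p.1) e1 (-e1) (a p.2 - a p.1) := by
  have step1 : ∏ p ∈ Finset.univ.filter (fun p : Fin r × Fin r => p.1 ≠ p.2),
      Lm (k p.1 - k p.2) e1 (-e1) (a p.2 - a p.1)
      = ∏ p ∈ Finset.univ.filter (fun p : Fin r × Fin r => p.1 ≠ p.2),
        Lm (k p.2 - k p.1) e1 (-e1) (-(a p.2 - a p.1)) := by
    apply Finset.prod_nbij' Prod.swap Prod.swap
    · intro p hp; simp only [Finset.mem_filter, Finset.mem_univ, true_and] at hp ⊢
      exact fun hc => hp hc.symm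
    · intro p hp; simp only [Finset.mem_filter, Finset.mem_univ, true_and] at hp ⊢
      exact fun hc => hp hc.symm
    · intro p _; simp
    · intro p _; simp
    · intro p _
      simp only [Prod.fst_swap, Prod.snd_swap]
      congr 1
      ring
  rw [step1]
  have step2 : ∀ p ∈ Finset.univ.filter (fun p : Fin r × Fin r => p.1 ≠ p.2),
      Lm (k p.2 - k p.1) e1 (-e1) (-(a p.2 - a p.1))
      = (-1 : K) ^ (emExp (k p.2 - k p.1)) * Lm (k p.2 - k p.1) e1 (-e1) (a p.2 - a p.1) :=
    fun p _ => Lm_neg_x _ _ _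
  rw [Finset.prod_congr rfl step2, Finset.prod_mul_distrib, Finset.prod_pow_eq_pow_sum,
    (even_sum_emExp r k hk0 hke).neg_one_pow, one_mul]

lemma Zcoeff_zero {K : Type*} [Field K] (r : ℕ) (e1 e2 : K) (a : Fin r → K) :
    Zcoeff K r 0 e1 e2 a = 1 := by
  have hset : {Y : Fin r → YoungDiagram | (∑ α, (Y α).card) = 0}
      = {fun _ => (⊥ : YoungDiagram)} := by
    ext Y
    simp only [Set.mem_setOf_eq, Set.mem_singleton_iff, Finset.sum_eq_zero_iff,
      Finset.mem_univ, true_implies]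
    constructor
    · intro hY
      funext α
      have : (Y α).cells = ∅ := Finset.card_eq_zero.mp (hY α)
      ext c
      simp [this]
    · intro hY α
      rw [hY]
      simp
  rw [Zcoeff, hset, finsum_mem_singleton]
  simp [nYab]

lemma finsum_mem_neg' {γ : Type*} {K : Type*} [Field K] (S : Set γ) (F : γ → K) :
    (∑ᶠ t ∈ S, -F t) = -∑ᶠ t ∈ S, F t := by
  rw [finsum_mem_def, finsum_mem_def, ← finsum_neg_distrib]
  congr 1
  funext i
  classical
  rw [Set.indicator_apply, Set.indicator_apply]
  split_ifs <;> simp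

lemma cancel_finsum {γ : Type*} {K : Type*} [Field K] [CharZero K] (S : Set γ) (F : γ → K)
    (σ : γ → γ) (hbij : Set.BijOn σ S S) (hkey : ∀ t ∈ S, -F t = F (σ t)) :
    (∑ᶠ t ∈ S, F t) = 0 := by
  have h1 : ∑ᶠ t ∈ S, -F t = ∑ᶠ t ∈ S, F t := finsum_mem_eq_of_bijOn σ hbij hkey
  have h2 : ∑ᶠ t ∈ S, -F t = -∑ᶠ t ∈ S, F t := finsum_mem_neg' S F
  have h3 : (2 : K) * (∑ᶠ t ∈ S, F t) = 0 := by
    rw [h2] at h1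
    linear_combination -h1
  exact (mul_eq_zero.mp h3).resolve_left two_ne_zero

lemma blowup_zero {K : Type*} [Field K] [CharZero K] (r : ℕ) (e1 : K) (b : Fin r → K) (n : ℕ)
    (ih : ∀ j, j < n → ∀ c : Fin r → K,
      Zcoeff K r j e1 (-2 * e1) c = Zcoeff K r j (2 * e1) (-e1) c) :
    (∑ᶠ t ∈ {t : (Fin r → ℤ) × ℕ × ℕ |
          (∑ α, t.1 α) = 0 ∧ (∑ α, (t.1 α) ^ 2) + 2 * t.2.1 + 2 * t.2.2 = 2 * n ∧
          ¬ (t.1 = 0 ∧ (t.2.1 = n ∨ t.2.2 = n))},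
        ((t.2.1 : K) * e1 + (t.2.2 : K) * (-e1) + (∑ α, (t.1 α : K) * b α)
            + ((∑ α, (t.1 α : K) ^ 2) / 2) * (e1 + -e1))
          * Zcoeff K r t.2.1 e1 (-2 * e1) (fun α => b α + e1 * (t.1 α : K))
          * Zcoeff K r t.2.2 (2 * e1) (-e1) (fun α => b α + -e1 * (t.1 α : K))
          * (∏ p ∈ Finset.univ.filter (fun p : Fin r × Fin r => p.1 ≠ p.2),
              Lm (t.1 p.2 - t.1 p.1) e1 (-e1) (b p.2 - b p.1))⁻¹) = 0 := by
  apply cancel_finsum _ _ (fun t => (-t.1, t.2.2, t.2.1))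
  · -- bijection
    have hmap : Set.MapsTo (fun t : (Fin r → ℤ) × ℕ × ℕ => (-t.1, t.2.2, t.2.1))
        {t : (Fin r → ℤ) × ℕ × ℕ |
          (∑ α, t.1 α) = 0 ∧ (∑ α, (t.1 α) ^ 2) + 2 * t.2.1 + 2 * t.2.2 = 2 * n ∧
          ¬ (t.1 = 0 ∧ (t.2.1 = n ∨ t.2.2 = n))}
        {t : (Fin r → ℤ) × ℕ × ℕ |
          (∑ α, t.1 α) = 0 ∧ (∑ α, (t.1 α) ^ 2) + 2 * t.2.1 + 2 * t.2.2 = 2 * n ∧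
          ¬ (t.1 = 0 ∧ (t.2.1 = n ∨ t.2.2 = n))} := by
      rintro ⟨k, l, m⟩ ⟨h1, h2, h3⟩
      refine ⟨?_, ?_, ?_⟩
      · simp only [Pi.neg_apply]
        rw [Finset.sum_neg_distrib, h1, neg_zero]
      · simp only [Pi.neg_apply, neg_sq]
        linarith [h2]
      · rintro ⟨hneg, hor⟩
        exact h3 ⟨by simpa [neg_eq_zero] using hneg, hor.symm⟩
    refine Set.InvOn.bijOn ⟨?_, ?_⟩ hmap hmap <;>
      · rintro ⟨k, l, m⟩ _
        simp
  · -- key pointwise identity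
    rintro ⟨k, l, m⟩ ht
    simp only [Set.mem_setOf_eq] at ht
    obtain ⟨hk0, hsum, hne⟩ := ht
    have hke : Even (∑ α, (k α) ^ 2) := ⟨(n : ℤ) - l - m, by linarith [hsum]⟩
    have hlm : l < n ∧ m < n := by
      by_cases hk : k = 0
      · have hz : (∑ α, (k α) ^ 2) = 0 := by simp [hk]
        rw [hz] at hsum
        simp only [hk, true_and, not_or] at hne
        constructor <;> omega
      · obtain ⟨α0, hα0⟩ := Function.ne_iff.mp hk
        have hα0' : k α0 ≠ 0 := by simpa using hα0
        have h1 : 1 ≤ (k α0) ^ 2 := by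
          rcases lt_or_gt_of_ne hα0' with h | h <;> nlinarith
        have hs1 : 1 ≤ ∑ α, (k α) ^ 2 :=
          le_trans h1 (Finset.single_le_sum (fun i _ => sq_nonneg (k i)) (Finset.mem_univ α0))
        obtain ⟨c, hc⟩ := hke
        have hs2 : 2 ≤ ∑ α, (k α) ^ 2 := by rw [hc] at hs1 ⊢; omega
        have : (l : ℤ) < n ∧ (m : ℤ) < n := by constructor <;> linarith
        exact ⟨by exact_mod_cast this.1, by exact_mod_cast this.2⟩
    obtain ⟨hl, hm⟩ := hlm
    dsimp only
    simp only [Pi.neg_apply, Int.cast_neg, neg_sq]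
    have hZm : Zcoeff K r m e1 (-2 * e1) (fun α => b α + e1 * -(k α : K))
        = Zcoeff K r m (2 * e1) (-e1) (fun α => b α + -e1 * (k α : K)) := by
      rw [ih m hm]
      congr 1
      funext α
      ring
    have hZl : Zcoeff K r l (2 * e1) (-e1) (fun α => b α + -e1 * -(k α : K))
        = Zcoeff K r l e1 (-2 * e1) (fun α => b α + e1 * (k α : K)) := by
      rw [← ih l hl]
      congr 1
      funext α
      ring
    have hP : ∏ p ∈ Finset.univ.filter (fun p : Fin r × Fin r => p.1 ≠ p.2),
          Lm (-k p.2 - -k p.1) e1 (-e1) (b p.2 - b p.1)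
        = ∏ p ∈ Finset.univ.filter (fun p : Fin r × Fin r => p.1 ≠ p.2),
          Lm (k p.2 - k p.1) e1 (-e1) (b p.2 - b p.1) := by
      rw [← prod_Lm_flip r k b e1 hk0 hke]
      apply Finset.prod_congr rfl
      intro p _
      congr 1
      ring
    rw [hZm, hZl, hP]
    have hsn : (∑ α, -(k α : K) * b α) = -(∑ α, (k α : K) * b α) := by
      rw [← Finset.sum_neg_distrib]
      exact Finset.sum_congr rfl fun α _ => by ring
    rw [hsn]
    ring

/-- assuming the `d = 1` blowup relation for all `n ≥ 1` (as an identity in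
the parameters), one has `Z_n(ε₁, −2ε₁, a⃗) = Z_n(2ε₁, −ε₁, a⃗)` for all `n ≥ 0`.
The sum on the right runs over triples `(k⃗, l, m)` with `k⃗` in the coroot lattice,
`(k⃗,k⃗)/2 + l + m = n` (i.e. `∑ k_α² + 2l + 2m = 2n`), excluding the two terms with
`k⃗ = 0` and `l = n` or `m = n`; the product `∏_{α∈Δ}` is over all ordered pairs
`p = (α,β)`, `α ≠ β`, of the factors `L_{k_β − k_α}(ε₁,ε₂, a_β − a_α)`. -/
theorem Z_eps_symmetry (K : Type*) [Field K] [CharZero K] (r : ℕ)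
    (h : ∀ (e1 e2 : K) (a : Fin r → K) (n : ℕ), 1 ≤ n →
      (n : K) * e1 * Zcoeff K r n e1 (e2 - e1) a
          + (n : K) * e2 * Zcoeff K r n (e1 - e2) e2 a
        = - ∑ᶠ t ∈ {t : (Fin r → ℤ) × ℕ × ℕ |
              (∑ α, t.1 α) = 0 ∧ (∑ α, (t.1 α) ^ 2) + 2 * t.2.1 + 2 * t.2.2 = 2 * n ∧
              ¬ (t.1 = 0 ∧ (t.2.1 = n ∨ t.2.2 = n))},
            ((t.2.1 : K) * e1 + (t.2.2 : K) * e2 + (∑ α, (t.1 α : K) * a α)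
                + ((∑ α, (t.1 α : K) ^ 2) / 2) * (e1 + e2))
              * Zcoeff K r t.2.1 e1 (e2 - e1) (fun α => a α + e1 * (t.1 α : K))
              * Zcoeff K r t.2.2 (e1 - e2) e2 (fun α => a α + e2 * (t.1 α : K))
              * (∏ p ∈ Finset.univ.filter (fun p : Fin r × Fin r => p.1 ≠ p.2),
                  Lm (t.1 p.2 - t.1 p.1) e1 e2 (a p.2 - a p.1))⁻¹) :
    ∀ (e1 : K) (a : Fin r → K) (n : ℕ),
      Zcoeff K r n e1 (-2 * e1) a = Zcoeff K r n (2 * e1) (-e1) a := by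
  intro e1 a n
  rcases eq_or_ne e1 0 with he | he
  · subst he
    norm_num
  · suffices H : ∀ n : ℕ, ∀ b : Fin r → K,
        Zcoeff K r n e1 (-2 * e1) b = Zcoeff K r n (2 * e1) (-e1) b from H n a
    intro n
    induction n using Nat.strong_induction_on with
    | _ n ih =>
      intro b
      rcases n with _ | N
      · rw [Zcoeff_zero, Zcoeff_zero]
      · have key := h e1 (-e1) b (N + 1) (by omega)
        have h1 : (-e1 - e1 : K) = -2 * e1 := by ring
        have h2 : (e1 - -e1 : K) = 2 * e1 := by ring
        rw [h1, h2] at key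
        have ih' : ∀ j, j < N + 1 → ∀ c : Fin r → K,
            Zcoeff K r j e1 (-2 * e1) c = Zcoeff K r j (2 * e1) (-e1) c :=
          fun j hj c => ih j hj c
        rw [blowup_zero r e1 b (N + 1) ih', neg_zero] at key
        apply mul_left_cancel₀
          (mul_ne_zero (Nat.cast_ne_zero.mpr (Nat.succ_ne_zero N) : ((N + 1 : ℕ) : K) ≠ 0) he)
        linear_combination key
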